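/- Let Ω ⊂ ℝ^n be a bounded connected open set, 1 < m ≤ n, and let u be C^2 on an open neighborhood of the closure Ω̄ with u = 0 on ∂Ω. Then the following are equivalent: (a) T_p[u] > 0 on Ω̄ for every p = 1, …, m; (b) T_m[u] > 0 on Ω̄ and u ≤ 0 on Ω̄. -/

import Mathlib

open MeasureTheory Finset Filter Topology

/-- `trMinor m S`: sum of all `m×m` principal minors of `S` (the `m`-trace `T_m(S)`). -/
noncomputable def trMinor {ι : Type} [Fintype ι] [DecidableEq ι] (m : ℕ)
    (S : Matrix ι ι ℝ) : ℝ :=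
  ∑ A ∈ Finset.powersetCard m (Finset.univ : Finset ι),
    (S.submatrix (fun i : {x // x ∈ A} => (i : ι)) (fun j : {x // x ∈ A} => (j : ι))).det

/-- Partial derivative in direction `e_i`. -/
noncomputable def pd {n : ℕ} (i : Fin n) (u : (Fin n → ℝ) → ℝ) (x : Fin n → ℝ) : ℝ :=
  fderiv ℝ u x (Pi.single i 1)

/-- Hessian matrix of `u` at `x`. -/
noncomputable def hessian {n : ℕ} (u : (Fin n → ℝ) → ℝ) (x : Fin n → ℝ) :
    Matrix (Fin n) (Fin n) ℝ :=
  fun i j => pd i (pd j u) x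

/-- The `m`-Hessian operator `T_m[u]`. -/
noncomputable def hessOp {n : ℕ} (m : ℕ) (u : (Fin n → ℝ) → ℝ) (x : Fin n → ℝ) : ℝ :=
  trMinor m (hessian u x)

/-- `T_m^{ij}(S)`: partial derivative of the polynomial `S ↦ T_m(S)` in the `(i,j)` entry. -/
noncomputable def trMinorD {ι : Type} [Fintype ι] [DecidableEq ι] (m : ℕ)
    (S : Matrix ι ι ℝ) (i j : ι) : ℝ :=
  deriv (fun t : ℝ => trMinor m (S + t • Matrix.single i j 1)) 0

/-- `T_m^{ij}[u] = (∂T_m/∂s_{ij})(u_xx)`. -/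
noncomputable def hessOpD {n : ℕ} (m : ℕ) (u : (Fin n → ℝ) → ℝ) (x : Fin n → ℝ)
    (i j : Fin n) : ℝ :=
  trMinorD m (hessian u x) i j

/-- Hessian integral `I_p[u] = ∫_Ω (−u) T_p[u] dx`. -/
noncomputable def hessInt {n : ℕ} (p : ℕ) (Ω : Set (Fin n → ℝ)) (u : (Fin n → ℝ) → ℝ) : ℝ :=
  ∫ x in Ω, (-u x) * hessOp p u x

/-- `u` is C² on an open neighborhood of the closure of `Ω`. -/
def C2OnNbhdOfClosure {n : ℕ} (k : ℕ) (Ω : Set (Fin n → ℝ)) (u : (Fin n → ℝ) → ℝ) : Prop :=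
  ∃ V : Set (Fin n → ℝ), IsOpen V ∧ closure Ω ⊆ V ∧ ContDiffOn ℝ k u V

/-- The cone `𝕂̊_m(Ω̄)`. -/
def admCone {n : ℕ} (m : ℕ) (Ω : Set (Fin n → ℝ)) (u : (Fin n → ℝ) → ℝ) : Prop :=
  C2OnNbhdOfClosure 2 Ω u ∧ (∀ x ∈ frontier Ω, u x = 0) ∧
    ∀ p, 1 ≤ p → p ≤ m → ∀ x ∈ closure Ω, 0 < hessOp p u x

/-- smooth compactly supported test function in Ω -/
def testFun {n : ℕ} (Ω : Set (Fin n → ℝ)) (u : (Fin n → ℝ) → ℝ) : Prop :=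
  ContDiff ℝ (⊤ : ℕ∞) u ∧ HasCompactSupport u ∧ tsupport u ⊆ Ω

/-- deleted principal trace: p-trace of S with i-th row/column removed -/
noncomputable def delTr {n : ℕ} (p : ℕ) (S : Matrix (Fin n) (Fin n) ℝ) (i : Fin n) : ℝ :=
  trMinor p (S.submatrix (fun k : {x : Fin n // x ≠ i} => (k : Fin n))
    (fun k : {x : Fin n // x ≠ i} => (k : Fin n)))



/-! ### Auxiliary development -/

section Aux
open Polynomial

lemma coeff_ms_nonneg (s : Multiset ℝ) (hs : ∀ a ∈ s, 0 ≤ a) (k : ℕ) :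
    0 ≤ ((s.map fun a => X + C a).prod).coeff k := by
  induction s using Multiset.induction_on generalizing k with
  | empty => simp [Polynomial.coeff_one]; positivity
  | cons a s ih =>
    have ha : 0 ≤ a := hs a (Multiset.mem_cons_self a s)
    have hs' : ∀ b ∈ s, 0 ≤ b := fun b hb => hs b (Multiset.mem_cons_of_mem hb)
    rw [Multiset.map_cons, Multiset.prod_cons, add_mul, coeff_add, coeff_C_mul]
    rcases k with _ | k
    · rw [mul_coeff_zero, coeff_X_zero, zero_mul]
      have := ih hs' 0
      positivity
    · rw [coeff_X_mul]
      have h1 := ih hs' k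
      have h2 := ih hs' (k+1)
      positivity

lemma coeff_ms_pos (s : Multiset ℝ) (hs : ∀ a ∈ s, 0 < a) :
    ∀ k ≤ Multiset.card s, 0 < ((s.map fun a => X + C a).prod).coeff k := by
  induction s using Multiset.induction_on with
  | empty =>
    intro k hk
    simp only [Multiset.card_zero, Nat.le_zero] at hk
    subst hk
    simp
  | cons a s ih =>
    intro k hk
    have ha : 0 < a := hs a (Multiset.mem_cons_self a s)
    have hs' : ∀ b ∈ s, 0 < b := fun b hb => hs b (Multiset.mem_cons_of_mem hb)
    have hnn : ∀ j, 0 ≤ ((s.map fun a => X + C a).prod).coeff j :=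
      coeff_ms_nonneg s (fun b hb => (hs' b hb).le)
    rw [Multiset.map_cons, Multiset.prod_cons, add_mul, coeff_add, coeff_C_mul]
    rcases k with _ | k
    · rw [mul_coeff_zero, coeff_X_zero, zero_mul, zero_add]
      have h0 : 0 < ((s.map fun a => X + C a).prod).coeff 0 := by
        apply ih hs' 0 (Nat.zero_le _)
      positivity
    · rw [coeff_X_mul]
      have hk' : k ≤ Multiset.card s := by
        rw [Multiset.card_cons] at hk; omega
      have h1 := ih hs' k hk'
      have h2 := hnn (k+1)
      positivity

lemma keyP (n m : ℕ) (hm1 : 1 ≤ m) (hmn : m ≤ n) (P : ℝ[X]) (hP : P.Monic)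
    (hdeg : P.natDegree = n) (hroots : Multiset.card P.roots = n)
    (hnn : ∀ p, 1 ≤ p → p ≤ m → 0 ≤ P.coeff (n - p)) (hposm : 0 < P.coeff (n - m)) :
    ∀ p, 1 ≤ p → p ≤ m → 0 < P.coeff (n - p) := by
  set Q : ℝ[X] := derivative^[n - m] P with hQ
  -- coefficients of Q
  have hQc : ∀ j, Q.coeff j = ((j + (n - m)).descFactorial (n - m) : ℝ) * P.coeff (j + (n - m)) := by
    intro j
    rw [hQ, Polynomial.coeff_iterate_derivative, nsmul_eq_mul]
  have hPn : P.coeff n = 1 := by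
    have := hP.coeff_natDegree
    rwa [hdeg] at this
  have hQm : Q.coeff m = (n.descFactorial (n - m) : ℝ) := by
    rw [hQc, show m + (n - m) = n by omega, hPn, mul_one]
  have hQmpos : 0 < (n.descFactorial (n - m) : ℝ) := by
    have : 0 < n.descFactorial (n - m) :=
      Nat.pos_of_ne_zero (fun h => by have := Nat.descFactorial_eq_zero_iff_lt.1 h; omega)
    exact_mod_cast this
  have hQne : Q ≠ 0 := fun h => by rw [h, Polynomial.coeff_zero] at hQm; linarith
  have hQdeg : Q.natDegree = m := by
    have h1 : Q.natDegree ≤ m := by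
      rw [hQ]
      have := Polynomial.natDegree_iterate_derivative P (n - m)
      rw [hdeg] at this; omega
    have h2 : m ≤ Q.natDegree := Polynomial.le_natDegree_of_ne_zero (by rw [hQm]; positivity)
    omega
  -- root count
  have hQroots : Multiset.card Q.roots = m := by
    have hge : ∀ k, n - k ≤ Multiset.card ((derivative^[k]) P).roots := by
      intro k
      induction k with
      | zero => simp [hroots]
      | succ k ih =>
        rw [Function.iterate_succ_apply']
        have := Polynomial.card_roots_le_derivative ((derivative^[k]) P)
        omega
    have h1 := hge (n - m)
    rw [← hQ] at h1
    have h2 : Multiset.card Q.roots ≤ m := by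
      have := Polynomial.card_roots' Q
      omega
    omega
  -- all coefficients of Q nonneg, coeff 0 positive
  have hQnn : ∀ j, 0 ≤ Q.coeff j := by
    intro j
    rcases le_or_gt j m with hj | hj
    · rw [hQc]
      rcases eq_or_lt_of_le hj with hj' | hj'
      · rw [hj', show m + (n - m) = n by omega, hPn]; positivity
      · have : j + (n - m) = n - (m - j) := by omega
        rw [this]
        have := hnn (m - j) (by omega) (by omega)
        positivity
    · rw [Polynomial.coeff_eq_zero_of_natDegree_lt (by omega)]
  have hQ0 : 0 < Q.coeff 0 := by
    rw [hQc, show 0 + (n - m) = n - m by omega]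
    have h1 : 0 < ((n - m).descFactorial (n - m) : ℝ) := by
      have : 0 < (n - m).descFactorial (n - m) :=
        Nat.pos_of_ne_zero (fun h => by have := Nat.descFactorial_eq_zero_iff_lt.1 h; omega)
      exact_mod_cast this
    positivity
  -- Q is positive on nonneg reals
  have hQpos : ∀ x : ℝ, 0 ≤ x → 0 < Q.eval x := by
    intro x hx
    rw [Polynomial.eval_eq_sum_range]
    have h0 : (0 : ℕ) ∈ Finset.range (Q.natDegree + 1) := by simp
    calc (0:ℝ) < Q.coeff 0 * x ^ 0 := by simpa using hQ0
    _ ≤ ∑ i ∈ Finset.range (Q.natDegree + 1), Q.coeff i * x ^ i := by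
        apply Finset.single_le_sum (f := fun i => Q.coeff i * x ^ i) _ h0
        intro i _
        have := hQnn i
        positivity
  have hrootsneg : ∀ μ ∈ Q.roots, 0 < -μ := by
    intro μ hμ
    have h1 : Q.eval μ = 0 := (Polynomial.mem_roots hQne).1 hμ
    by_contra h
    have : 0 ≤ μ := by linarith [not_lt.mp h]
    linarith [hQpos μ this]
  -- factor Q
  have hfac : Polynomial.C Q.leadingCoeff * (Q.roots.map fun a => X - C a).prod = Q :=
    Polynomial.C_leadingCoeff_mul_prod_multiset_X_sub_C (by rw [hQroots, hQdeg])
  have hlead : Q.leadingCoeff = (n.descFactorial (n - m) : ℝ) := by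
    rw [Polynomial.leadingCoeff, hQdeg, hQm]
  have hre : (Q.roots.map fun a => X - C a).prod
      = ((Q.roots.map Neg.neg).map fun a => X + C a).prod := by
    rw [Multiset.map_map]
    congr 1
    apply Multiset.map_congr rfl
    intro a _
    simp [sub_eq_add_neg, map_neg]
  have hRpos : ∀ k ≤ m, 0 < ((Q.roots.map fun a => X - C a).prod).coeff k := by
    intro k hk
    rw [hre]
    apply coeff_ms_pos
    · intro a ha
      obtain ⟨μ, hμ, rfl⟩ := Multiset.mem_map.1 ha
      exact hrootsneg μ hμ
    · rwa [Multiset.card_map, hQroots]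
  -- conclude
  intro p hp1 hpm
  have hQcoeff : 0 < Q.coeff (m - p) := by
    rw [← hfac, Polynomial.coeff_C_mul, hlead]
    have := hRpos (m - p) (by omega)
    positivity
  rw [hQc, show m - p + (n - m) = n - p by omega] at hQcoeff
  have hD : 0 < ((n - p).descFactorial (n - m) : ℝ) := by
    have : 0 < (n - p).descFactorial (n - m) :=
      Nat.pos_of_ne_zero (fun h => by have := Nat.descFactorial_eq_zero_iff_lt.1 h; omega)
    exact_mod_cast this
  by_contra h
  push_neg at h
  nlinarith

end Aux

section AuxDet
open Finset

variable {ι : Type} [Fintype ι] [DecidableEq ι]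

/-- det of a matrix whose rows off `s` are basis vectors equals the principal minor on `s`. -/
lemma det_rows_single (s : Finset ι) (M : Matrix ι ι ℝ)
    (hM : ∀ i ∉ s, M i = Pi.single i 1) :
    M.det = (M.submatrix (fun i : {x // x ∈ s} => (i : ι)) (fun j : {x // x ∈ s} => (j : ι))).det := by
  classical
  let e : {x // x ∈ s} ⊕ {x // ¬ x ∈ s} ≃ ι := Equiv.sumCompl (· ∈ s)
  have h1 : M.det = (M.submatrix e e).det := (Matrix.det_submatrix_equiv_self e M).symm
  have h2 : M.submatrix e e =
      Matrix.fromBlocks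
        (M.submatrix (fun i : {x // x ∈ s} => (i : ι)) (fun j : {x // x ∈ s} => (j : ι)))
        (M.submatrix (fun i : {x // x ∈ s} => (i : ι)) (fun j : {x // ¬ x ∈ s} => (j : ι)))
        0 1 := by
    ext i j
    rcases i with i | i <;> rcases j with j | j
    · rfl
    · rfl
    · simp only [Matrix.submatrix_apply, Matrix.fromBlocks_apply₂₁, Matrix.zero_apply,
        Equiv.sumCompl_apply_inr, Equiv.sumCompl_apply_inl, e]
      rw [hM i i.2]
      have : (j : ι) ≠ (i : ι) := fun h => i.2 (h ▸ j.2)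
      simp [Pi.single_apply, this]
    · simp only [Matrix.submatrix_apply, Matrix.fromBlocks_apply₂₂,
        Equiv.sumCompl_apply_inr, e]
      rw [hM i i.2]
      simp [Pi.single_apply, Matrix.one_apply, eq_comm, Subtype.ext_iff]
  rw [h1, h2, Matrix.det_fromBlocks_zero₂₁, Matrix.det_one, mul_one]

lemma det_add_smul_one (S : Matrix ι ι ℝ) (t : ℝ) :
    (S + t • (1 : Matrix ι ι ℝ)).det
      = ∑ p ∈ Finset.range (Fintype.card ι + 1), trMinor p S * t ^ (Fintype.card ι - p) := by
  classical
  have hrow : (S + t • (1 : Matrix ι ι ℝ)) = fun i => S i + t • (Pi.single i 1 : ι → ℝ) := by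
    ext i j
    simp [Matrix.one_apply, Pi.single_apply, eq_comm, mul_comm]
  have hdet : (S + t • (1 : Matrix ι ι ℝ)).det
      = (Matrix.detRowAlternating (R := ℝ) (n := ι)).toMultilinearMap
          ((fun i => S i) + (fun i => t • (Pi.single i 1 : ι → ℝ))) := by
    rw [hrow]; rfl
  rw [hdet, MultilinearMap.map_add_univ]
  have hterm : ∀ s : Finset ι,
      (Matrix.detRowAlternating (R := ℝ) (n := ι)).toMultilinearMap
        (s.piecewise (fun i => S i) (fun i => t • (Pi.single i 1 : ι → ℝ)))
      = t ^ (Fintype.card ι - s.card) *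
          (S.submatrix (fun i : {x // x ∈ s} => (i : ι)) (fun j : {x // x ∈ s} => (j : ι))).det := by
    intro s
    set N : Matrix ι ι ℝ := fun i => s.piecewise (fun i => S i) (fun i => (Pi.single i 1 : ι → ℝ)) i
      with hN
    have hpw : s.piecewise (fun i => S i) (fun i => t • (Pi.single i 1 : ι → ℝ))
        = sᶜ.piecewise (fun i => t • N i) N := by
      funext i
      by_cases hi : i ∈ s
      · simp [Finset.piecewise, hi, hN]
      · simp [Finset.piecewise, hi, hN]
    rw [hpw]
    have := MultilinearMap.map_piecewise_smul
      (Matrix.detRowAlternating (R := ℝ) (n := ι)).toMultilinearMap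
      (fun _ : ι => t) N sᶜ
    rw [this]
    have hNdet : (Matrix.detRowAlternating (R := ℝ) (n := ι)).toMultilinearMap N = N.det := rfl
    have hNs : N.det
        = (S.submatrix (fun i : {x // x ∈ s} => (i : ι)) (fun j : {x // x ∈ s} => (j : ι))).det := by
      rw [det_rows_single s N (fun i hi => by simp [hN, Finset.piecewise, hi])]
      congr 1
      ext i j
      show N i j = S i j
      simp [hN, Finset.piecewise, i.2]
    rw [hNdet, hNs, Finset.prod_const, Finset.card_compl, smul_eq_mul]
  rw [Finset.sum_congr rfl (fun s _ => hterm s)]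
  rw [← Finset.powerset_univ, Finset.sum_powerset (Finset.univ : Finset ι)
    (fun s => t ^ (Fintype.card ι - s.card) *
      (S.submatrix (fun i : {x // x ∈ s} => (i : ι)) (fun j : {x // x ∈ s} => (j : ι))).det)]
  rw [Finset.card_univ]
  apply Finset.sum_congr rfl
  intro p hp
  rw [trMinor, Finset.sum_mul]
  apply Finset.sum_congr rfl
  intro A hA
  have hc : A.card = p := (Finset.mem_powersetCard.1 hA).2
  rw [hc, mul_comm]

end AuxDet

section AuxSpec
open Finset Polynomial

variable {n : ℕ}

/-- For a symmetric matrix, `det (S + t·1) = ∏ (λᵢ + t)`. -/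
lemma det_add_smul_one_eq_prod {S : Matrix (Fin n) (Fin n) ℝ} (hS : S.IsHermitian) (t : ℝ) :
    (S + t • (1 : Matrix (Fin n) (Fin n) ℝ)).det = ∏ i, (hS.eigenvalues i + t) := by
  classical
  set U : Matrix (Fin n) (Fin n) ℝ := (Matrix.IsHermitian.eigenvectorUnitary hS : Matrix (Fin n) (Fin n) ℝ)
  have hU : U * star U = 1 := (Matrix.mem_unitaryGroup_iff).mp (Matrix.IsHermitian.eigenvectorUnitary hS).2
  have hspec : S = U * Matrix.diagonal (RCLike.ofReal ∘ hS.eigenvalues) * star U :=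
    Matrix.IsHermitian.spectral_theorem hS
  have hdiag : (RCLike.ofReal ∘ hS.eigenvalues : Fin n → ℝ) = hS.eigenvalues := by
    funext i; simp
  rw [hdiag] at hspec
  have key : S + t • (1 : Matrix (Fin n) (Fin n) ℝ)
      = U * (Matrix.diagonal (fun i => hS.eigenvalues i + t)) * star U := by
    have h1 : Matrix.diagonal (fun i => hS.eigenvalues i + t)
        = Matrix.diagonal hS.eigenvalues + t • (1 : Matrix (Fin n) (Fin n) ℝ) := by
      ext i j
      rcases eq_or_ne i j with rfl | h
      · simp [Matrix.one_apply_eq]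
      · simp [Matrix.diagonal_apply_ne _ h, Matrix.one_apply_ne h]
    rw [h1, Matrix.mul_add, Matrix.add_mul]
    have h2 : t • (1 : Matrix (Fin n) (Fin n) ℝ)
        = U * (t • (1 : Matrix (Fin n) (Fin n) ℝ)) * star U := by
      rw [Matrix.mul_smul, Matrix.mul_one, Matrix.smul_mul, hU]
    nth_rewrite 1 [hspec, h2]
    rfl
  have hUdet : U.det * (star U).det = 1 := by
    rw [← Matrix.det_mul, hU, Matrix.det_one]
  rw [key, Matrix.det_mul, Matrix.det_mul, Matrix.det_diagonal]
  calc U.det * (∏ i, (hS.eigenvalues i + t)) * (star U).det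
      = (∏ i, (hS.eigenvalues i + t)) * (U.det * (star U).det) := by ring
    _ = ∏ i, (hS.eigenvalues i + t) := by rw [hUdet, mul_one]

lemma prod_eigen_poly {S : Matrix (Fin n) (Fin n) ℝ} (hS : S.IsHermitian) :
    (∏ i, (X + C (hS.eigenvalues i)) : ℝ[X])
      = ∑ p ∈ Finset.range (n + 1), C (trMinor p S) * X ^ (n - p) := by
  apply Polynomial.funext
  intro t
  have h1 : Polynomial.eval t (∏ i, (X + C (hS.eigenvalues i)) : ℝ[X])
      = ∏ i, (hS.eigenvalues i + t) := by
    rw [Polynomial.eval_prod]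
    apply Finset.prod_congr rfl
    intro i _
    simp [add_comm]
  rw [h1, ← det_add_smul_one_eq_prod hS t, det_add_smul_one]
  simp [Polynomial.eval_finset_sum]

lemma coeff_eq_trMinor {S : Matrix (Fin n) (Fin n) ℝ} (hS : S.IsHermitian) {p : ℕ} (hp : p ≤ n) :
    (∏ i, (X + C (hS.eigenvalues i)) : ℝ[X]).coeff (n - p) = trMinor p S := by
  rw [prod_eigen_poly hS, Polynomial.finset_sum_coeff]
  have : ∀ q ∈ Finset.range (n+1),
      (C (trMinor q S) * X ^ (n - q)).coeff (n - p) = if q = p then trMinor q S else 0 := by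
    intro q hq
    rw [Polynomial.coeff_C_mul, Polynomial.coeff_X_pow]
    have hq' : q ≤ n := by simp at hq; omega
    by_cases h : q = p
    · subst h; simp
    · have : ¬ (n - p = n - q) := fun hc => h (by omega)
      simp [this, h]
  rw [Finset.sum_congr rfl this, Finset.sum_ite_eq' (Finset.range (n+1)) p fun q => trMinor q S]
  simp [Nat.lt_succ_iff.mpr hp]

/-- properties of the eigenvalue polynomial -/
lemma eigenPoly_monic {S : Matrix (Fin n) (Fin n) ℝ} (hS : S.IsHermitian) :
    (∏ i, (X + C (hS.eigenvalues i)) : ℝ[X]).Monic :=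
  Polynomial.monic_prod_of_monic _ _ fun i _ => Polynomial.monic_X_add_C _

lemma eigenPoly_natDegree {S : Matrix (Fin n) (Fin n) ℝ} (hS : S.IsHermitian) :
    (∏ i, (X + C (hS.eigenvalues i)) : ℝ[X]).natDegree = n := by
  rw [Polynomial.natDegree_prod_of_monic _ _ fun i _ => Polynomial.monic_X_add_C _]
  simp [Polynomial.natDegree_X_add_C]

lemma eigenPoly_roots_card {S : Matrix (Fin n) (Fin n) ℝ} (hS : S.IsHermitian) :
    Multiset.card (∏ i, (X + C (hS.eigenvalues i)) : ℝ[X]).roots = n := by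
  have h : (∏ i, (X + C (hS.eigenvalues i)) : ℝ[X])
      = ((Finset.univ.val.map (fun i => - hS.eigenvalues i)).map fun a => X - C a).prod := by
    rw [Multiset.map_map]
    rw [Finset.prod_eq_multiset_prod]
    apply congrArg
    apply Multiset.map_congr rfl
    intro i _
    simp [sub_eq_add_neg]
  rw [h, Polynomial.roots_multiset_prod_X_sub_C]
  simp

/-- Key propagation lemma: for a symmetric matrix with `T_p ≥ 0` for `p ≤ m` and `T_m > 0`,
all `T_p` are positive. -/
lemma trMinor_pos_chain {S : Matrix (Fin n) (Fin n) ℝ} (hS : S.IsHermitian) {m : ℕ}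
    (hm1 : 1 ≤ m) (hmn : m ≤ n)
    (hnn : ∀ p, 1 ≤ p → p ≤ m → 0 ≤ trMinor p S) (hpos : 0 < trMinor m S) :
    ∀ p, 1 ≤ p → p ≤ m → 0 < trMinor p S := by
  intro p hp1 hpm
  rw [← coeff_eq_trMinor hS (hpm.trans hmn)]
  exact keyP n m hm1 hmn _ (eigenPoly_monic hS) (eigenPoly_natDegree hS)
    (eigenPoly_roots_card hS)
    (fun q h1 h2 => by rw [coeff_eq_trMinor hS (h2.trans hmn)]; exact hnn q h1 h2)
    (by rw [coeff_eq_trMinor hS hmn]; exact hpos) p hp1 hpm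

lemma trMinor_nonneg_psd {S : Matrix (Fin n) (Fin n) ℝ} (hS : S.PosSemidef) {p : ℕ}
    (hp : p ≤ n) : 0 ≤ trMinor p S := by
  rw [← coeff_eq_trMinor hS.1 hp]
  have h : (∏ i, (X + C (hS.1.eigenvalues i)) : ℝ[X])
      = ((Finset.univ.val.map hS.1.eigenvalues).map fun a => X + C a).prod := by
    rw [Multiset.map_map, Finset.prod_eq_multiset_prod]
    rfl
  rw [h]
  apply coeff_ms_nonneg
  intro a ha
  obtain ⟨i, _, rfl⟩ := Multiset.mem_map.1 ha
  exact hS.eigenvalues_nonneg i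

lemma trMinor_one_eq_trace {ι : Type} [Fintype ι] [DecidableEq ι] (S : Matrix ι ι ℝ) :
    trMinor 1 S = ∑ i, S i i := by
  classical
  rw [trMinor]
  rw [Finset.powersetCard_one]
  rw [Finset.sum_map]
  apply Finset.sum_congr rfl
  intro i _
  letI : Unique {x // x ∈ ({i} : Finset ι)} :=
    ⟨⟨⟨i, Finset.mem_singleton_self i⟩⟩, fun a => Subtype.ext (Finset.mem_singleton.1 a.2)⟩
  rw [Matrix.det_unique]
  rfl

lemma trMinor_continuous {ι : Type} [Fintype ι] [DecidableEq ι] (p : ℕ) :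
    Continuous fun S : Matrix ι ι ℝ => trMinor p S := by
  apply continuous_finset_sum
  intro A _
  have h1 : Continuous fun S : Matrix ι ι ℝ =>
      S.submatrix (fun i : {x // x ∈ A} => (i : ι)) (fun j : {x // x ∈ A} => (j : ι)) := by
    apply continuous_pi; intro i; apply continuous_pi; intro j
    exact (continuous_apply_apply _ _)
  exact Continuous.matrix_det h1

lemma trMinor_zero_mat {m : ℕ} (hm : 1 ≤ m) (hmn : m ≤ n) :
    trMinor m (0 : Matrix (Fin n) (Fin n) ℝ) = 0 := by
  rw [trMinor]
  apply Finset.sum_eq_zero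
  intro A hA
  have hc : A.card = m := (Finset.mem_powersetCard.1 hA).2
  have : A.Nonempty := Finset.card_pos.1 (by omega)
  obtain ⟨a, ha⟩ := this
  have : Nonempty {x // x ∈ A} := ⟨⟨a, ha⟩⟩
  rw [show (0 : Matrix (Fin n) (Fin n) ℝ).submatrix
      (fun i : {x // x ∈ A} => (i : Fin n)) (fun j : {x // x ∈ A} => (j : Fin n))
      = (0 : Matrix {x // x ∈ A} {x // x ∈ A} ℝ) from rfl]
  exact Matrix.det_zero

end AuxSpec

section AuxCalc
open Filter Topology

/-- 1-D second derivative test at a local maximum. -/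
lemma second_deriv_test_max {f g : ℝ → ℝ} {L : ℝ}
    (hf : ∀ᶠ t in 𝓝 (0:ℝ), HasDerivAt f (g t) t) (hg : HasDerivAt g L 0)
    (hmax : IsLocalMax f 0) : L ≤ 0 := by
  by_contra hL
  push_neg at hL
  have hg0 : g 0 = 0 := hmax.hasDerivAt_eq_zero hf.self_of_nhds
  -- slope of g tends to L, so g is positive on a right neighborhood
  have hslope : Tendsto (fun t => g t / t) (𝓝[>] (0:ℝ)) (𝓝 L) := by
    have := hasDerivAt_iff_tendsto_slope.1 hg
    have h2 := this.mono_left (nhdsWithin_mono _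
      (fun t ht => Set.mem_compl_singleton_iff.mpr (ne_of_gt ht)))
    refine h2.congr' ?_
    filter_upwards [self_mem_nhdsWithin] with t ht
    simp [slope, hg0, inv_mul_eq_div]
  have hgpos : ∀ᶠ t in 𝓝[>] (0:ℝ), 0 < g t := by
    have := hslope.eventually (eventually_gt_nhds hL)
    filter_upwards [this, self_mem_nhdsWithin] with t h1 h2
    simp only [Set.mem_Ioi] at h2
    have := mul_pos h1 h2
    rwa [div_mul_cancel₀] at this
    exact ne_of_gt h2
  -- extract a uniform interval
  obtain ⟨δ₁, hδ₁, h₁⟩ := Metric.eventually_nhds_iff.1 (hf.and hmax)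
  obtain ⟨δ₂, hδ₂⟩ := (nhdsGT_basis_of_exists_gt (⟨1, by norm_num⟩ : ∃ b, (0:ℝ) < b)).eventually_iff.1 hgpos
  set b := min (δ₁ / 2) δ₂ / 2 with hb
  have hδ₂1 : 0 < δ₂ := hδ₂.1
  have hbpos : 0 < b := by positivity
  have hbδ₁ : b < δ₁ := by
    have : δ₁ / 2 / 2 < δ₁ := by linarith
    calc b ≤ δ₁ / 2 / 2 := by apply div_le_div_of_nonneg_right (min_le_left _ _) (by norm_num)
    _ < δ₁ := this
  have hbmem : ∀ t ∈ Set.Icc (0:ℝ) b, dist t 0 < δ₁ := by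
    intro t ht
    rw [Real.dist_eq, sub_zero, abs_of_nonneg ht.1]
    exact lt_of_le_of_lt ht.2 hbδ₁
  have hcont : ContinuousOn f (Set.Icc 0 b) := fun t ht =>
    ((h₁ (hbmem t ht)).1.continuousAt).continuousWithinAt
  have hderiv : ∀ t ∈ Set.Ioo (0:ℝ) b, HasDerivAt f (g t) t := fun t ht =>
    (h₁ (hbmem t ⟨ht.1.le, ht.2.le⟩)).1
  obtain ⟨c, hc, hceq⟩ := exists_hasDerivAt_eq_slope f g hbpos hcont hderiv
  have hgc : 0 < g c := by
    apply hδ₂.2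
    constructor
    · exact hc.1
    · calc c < b := hc.2
      _ ≤ δ₂ / 2 := by apply div_le_div_of_nonneg_right (min_le_right _ _) (by norm_num)
      _ ≤ δ₂ := by linarith
  have hfb : f b ≤ f 0 := (h₁ (hbmem b ⟨hbpos.le, le_rfl⟩)).2
  rw [hceq, sub_zero] at hgc
  have : 0 < f b - f 0 := by
    have := mul_pos hgc hbpos
    rwa [div_mul_cancel₀] at this
    exact ne_of_gt hbpos
  linarith

variable {n : ℕ} {u : (Fin n → ℝ) → ℝ} {V : Set (Fin n → ℝ)}

section calc2
variable (hV : IsOpen V) (hu : ContDiffOn ℝ 2 u V)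
include hV hu

lemma fderiv_u_differentiableAt {x : Fin n → ℝ} (hx : x ∈ V) :
    DifferentiableAt ℝ (fderiv ℝ u) x := by
  have h1 : ContDiffOn ℝ 1 (fderiv ℝ u) V :=
    hu.fderiv_of_isOpen hV (by norm_num)
  exact (h1.differentiableOn (by norm_num)).differentiableAt (hV.mem_nhds hx)

lemma u_differentiableAt {x : Fin n → ℝ} (hx : x ∈ V) : DifferentiableAt ℝ u x :=
  (hu.differentiableOn (by norm_num)).differentiableAt (hV.mem_nhds hx)

/-- the Hessian matrix entries equal the second derivative applied to basis vectors. -/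
lemma hessian_eq_snd {x : Fin n → ℝ} (hx : x ∈ V) (i j : Fin n) :
    hessian u x i j = fderiv ℝ (fderiv ℝ u) x (Pi.single i 1) (Pi.single j 1) := by
  have hB := (fderiv_u_differentiableAt hV hu hx).hasFDerivAt
  let A : ((Fin n → ℝ) →L[ℝ] ℝ) →L[ℝ] ℝ := ContinuousLinearMap.apply ℝ ℝ (Pi.single j 1)
  have hcomp : HasFDerivAt (fun y => A (fderiv ℝ u y))
      (A.comp (fderiv ℝ (fderiv ℝ u) x)) x := A.hasFDerivAt.comp x hB
  have hpd : pd j u = fun y => A (fderiv ℝ u y) := rfl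
  show pd i (pd j u) x = fderiv ℝ (fderiv ℝ u) x (Pi.single i 1) (Pi.single j 1)
  rw [pd, hpd, hcomp.fderiv]
  rfl

/-- symmetry of the Hessian. -/
lemma hessian_isHermitian {x : Fin n → ℝ} (hx : x ∈ V) : (hessian u x).IsHermitian := by
  have hsymm := second_derivative_symmetric_of_eventually (f := u)
    (f' := fderiv ℝ u) (f'' := fderiv ℝ (fderiv ℝ u) x)
    (by filter_upwards [hV.mem_nhds hx] with y hy
        exact (u_differentiableAt hV hu hy).hasFDerivAt)
    (fderiv_u_differentiableAt hV hu hx).hasFDerivAt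
  rw [Matrix.IsHermitian]
  ext i j
  rw [Matrix.conjTranspose_apply, hessian_eq_snd hV hu hx, hessian_eq_snd hV hu hx]
  rw [star_trivial]
  exact hsymm _ _

omit hV hu in
/-- derivative along a line. -/
lemma line_hasDerivAt (x v : Fin n → ℝ) (t : ℝ) :
    HasDerivAt (fun s : ℝ => x + s • v) v t := by
  have h1 : HasDerivAt (fun s : ℝ => s • v) ((1:ℝ) • v) t :=
    (hasDerivAt_id t).smul_const v
  rw [one_smul] at h1
  exact h1.const_add x

lemma u_line_hasDerivAt {x v : Fin n → ℝ} {t : ℝ} (hx : x + t • v ∈ V) :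
    HasDerivAt (fun s : ℝ => u (x + s • v)) (fderiv ℝ u (x + t • v) v) t :=
  (u_differentiableAt hV hu hx).hasFDerivAt.comp_hasDerivAt t (line_hasDerivAt x v t)

lemma u_line_snd_hasDerivAt {x : Fin n → ℝ} (hx : x ∈ V) (v : Fin n → ℝ) :
    HasDerivAt (fun s : ℝ => fderiv ℝ u (x + s • v) v)
      (fderiv ℝ (fderiv ℝ u) x v v) 0 := by
  let A : ((Fin n → ℝ) →L[ℝ] ℝ) →L[ℝ] ℝ := ContinuousLinearMap.apply ℝ ℝ v
  have hB := (fderiv_u_differentiableAt hV hu hx).hasFDerivAt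
  have hcomp : HasFDerivAt (fun y => A (fderiv ℝ u y))
      (A.comp (fderiv ℝ (fderiv ℝ u) x)) x := A.hasFDerivAt.comp x hB
  have hline := line_hasDerivAt x v 0
  have h0 : x + (0:ℝ) • v = x := by simp
  rw [← h0] at hcomp
  have h2 := hcomp.comp_hasDerivAt 0 hline
  rw [h0] at h2
  exact h2

/-- quadratic form of the Hessian is the second directional derivative. -/
lemma hessian_quadform {x : Fin n → ℝ} (hx : x ∈ V) (v : Fin n → ℝ) :
    fderiv ℝ (fderiv ℝ u) x v v = ∑ i, ∑ j, v i * v j * hessian u x i j := by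
  set B := fderiv ℝ (fderiv ℝ u) x with hB
  have expand : ∀ (L : (Fin n → ℝ) →L[ℝ] ℝ) (w : Fin n → ℝ),
      L w = ∑ j, w j * L (Pi.single j 1) := by
    intro L w
    have hw : w = ∑ j, w j • (Pi.single j 1 : Fin n → ℝ) := by
      funext j
      rw [Finset.sum_apply]
      simp [Pi.single_apply]
    conv_lhs => rw [hw]
    rw [_root_.map_sum]
    exact Finset.sum_congr rfl fun j _ => by rw [_root_.map_smul, smul_eq_mul]
  have h1 : B v v = ∑ i, v i * B (Pi.single i 1) v := by
    have := expand (B.flip v) v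
    simpa [ContinuousLinearMap.flip_apply] using this
  rw [h1]
  refine Finset.sum_congr rfl fun i _ => ?_
  rw [expand (B (Pi.single i 1)) v, Finset.mul_sum]
  refine Finset.sum_congr rfl fun j _ => ?_
  rw [hessian_eq_snd hV hu hx i j, ← hB]
  ring
end calc2


lemma hessOp_continuousOn {n : ℕ} {u : (Fin n → ℝ) → ℝ} {V : Set (Fin n → ℝ)}
    (hV : IsOpen V) (hu : ContDiffOn ℝ 2 u V) (p : ℕ) :
    ContinuousOn (fun x => hessOp p u x) V := by
  have hc1 : ContDiffOn ℝ 1 (fderiv ℝ u) V := hu.fderiv_of_isOpen hV (by norm_num)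
  have hc2 : ContinuousOn (fderiv ℝ (fderiv ℝ u)) V :=
    hc1.continuousOn_fderiv_of_isOpen hV le_rfl
  have hent : ∀ i j : Fin n, ContinuousOn
      (fun x => fderiv ℝ (fderiv ℝ u) x (Pi.single i 1) (Pi.single j 1)) V :=
    fun i j => (hc2.clm_apply continuousOn_const).clm_apply continuousOn_const
  have hhess : ContinuousOn (fun x => hessian u x) V := by
    apply continuousOn_pi.2
    intro i
    apply continuousOn_pi.2
    intro j
    exact (hent i j).congr fun x hx => hessian_eq_snd hV hu hx i j
  exact (trMinor_continuous p).comp_continuousOn hhess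

end AuxCalc

/-- coincidence of the two descriptions of the cone of m-admissible
functions vanishing on the boundary. -/
theorem stmt_3 (n m : ℕ) (hm1 : 1 < m) (hmn : m ≤ n)
    (Ω : Set (Fin n → ℝ)) (hΩo : IsOpen Ω) (hΩb : Bornology.IsBounded Ω)
    (hΩc : IsConnected Ω)
    (u : (Fin n → ℝ) → ℝ) (hu : C2OnNbhdOfClosure 2 Ω u)
    (hu0 : ∀ x ∈ frontier Ω, u x = 0) :
    (∀ p, 1 ≤ p → p ≤ m → ∀ x ∈ closure Ω, 0 < hessOp p u x) ↔
      ((∀ x ∈ closure Ω, 0 < hessOp m u x) ∧ ∀ x ∈ closure Ω, u x ≤ 0) := by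
  obtain ⟨V, hVo, hKV, huV⟩ := hu
  set K := closure Ω with hK
  have hKc : IsCompact K := hΩb.isCompact_closure
  have hKne : K.Nonempty := hΩc.nonempty.closure
  have hΩK : Ω ⊆ K := subset_closure
  have hucont : ContinuousOn u K := huV.continuousOn.mono hKV
  have hmemΩ : ∀ z ∈ K, u z ≠ 0 → z ∈ Ω := by
    intro z hz hne
    by_contra h'
    exact hne (hu0 z (by rw [hΩo.frontier_eq]; exact ⟨hz, h'⟩))
  constructor
  · -- forward
    intro h
    refine ⟨fun x hx => h m (by omega) le_rfl x hx, ?_⟩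
    intro x hx
    by_contra hpos
    push_neg at hpos
    obtain ⟨z, hzK, hzmax⟩ := hKc.exists_isMaxOn hKne hucont
    have huz : 0 < u z := lt_of_lt_of_le hpos (hzmax hx)
    have hzΩ : z ∈ Ω := hmemΩ z hzK (ne_of_gt huz)
    have hzV : z ∈ V := hKV hzK
    have hlocmax : IsLocalMax u z := by
      filter_upwards [hΩo.mem_nhds hzΩ] with y hy using hzmax (hΩK hy)
    have hdiag : ∀ i : Fin n, hessian u z i i ≤ 0 := by
      intro i
      set v := (Pi.single i 1 : Fin n → ℝ) with hv
      have hT : Tendsto (fun t : ℝ => z + t • v) (𝓝 0) (𝓝 z) := by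
        have hc : Continuous fun t : ℝ => z + t • v := continuous_const.add (continuous_id.smul continuous_const)
        have := hc.tendsto 0
        simpa using this
      have hev : ∀ᶠ t in 𝓝 (0:ℝ), z + t • v ∈ V := hT (hVo.mem_nhds hzV)
      have hfd : ∀ᶠ t in 𝓝 (0:ℝ),
          HasDerivAt (fun s : ℝ => u (z + s • v)) (fderiv ℝ u (z + t • v) v) t :=
        hev.mono fun t ht => u_line_hasDerivAt hVo huV ht
      have hg := u_line_snd_hasDerivAt hVo huV hzV v
      have hlm : IsLocalMax (fun t : ℝ => u (z + t • v)) 0 := by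
        have h' := hT.eventually hlocmax
        show ∀ᶠ t in 𝓝 (0:ℝ), u (z + t • v) ≤ (fun t : ℝ => u (z + t • v)) 0
        simpa using h'
      have hL := second_deriv_test_max hfd hg hlm
      have hq : fderiv ℝ (fderiv ℝ u) z v v = hessian u z i i := by
        rw [hessian_quadform hVo huV hzV v]
        rw [Finset.sum_eq_single i, Finset.sum_eq_single i]
        · simp [hv, Pi.single_apply]
        · intro j _ hj
          simp [hv, Pi.single_apply, Ne.symm hj]
        · intro h; exact absurd (Finset.mem_univ i) h
        · intro j _ hj
          apply Finset.sum_eq_zero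
          intro k _
          simp [hv, Pi.single_apply, Ne.symm hj]
        · intro h; exact absurd (Finset.mem_univ i) h
      linarith [hq ▸ hL]
    have htr := h 1 (by omega) (by omega) z hzK
    rw [show hessOp 1 u z = trMinor 1 (hessian u z) from rfl,
      trMinor_one_eq_trace] at htr
    have : ∑ i, hessian u z i i ≤ 0 := Finset.sum_nonpos fun i _ => hdiag i
    linarith
  · -- backward
    rintro ⟨hTm, hule⟩
    have hmn1 : 1 ≤ m := by omega
    -- open sets
    set U₁ : Set (Fin n → ℝ) :=
      ⋂ q ∈ Finset.Icc 1 m, {y | y ∈ V ∧ 0 < hessOp q u y} with hU₁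
    set U₂ : Set (Fin n → ℝ) :=
      ⋃ q ∈ Finset.Icc 1 m, {y | y ∈ V ∧ hessOp q u y < 0} with hU₂
    have hopen : ∀ q (W : Set ℝ), IsOpen W → IsOpen {y | y ∈ V ∧ hessOp q u y ∈ W} := by
      intro q W hW
      have := (hessOp_continuousOn hVo huV q).isOpen_inter_preimage hVo hW
      have heq : {y | y ∈ V ∧ hessOp q u y ∈ W} = V ∩ (fun x => hessOp q u x) ⁻¹' W := by
        ext y
        simp [Set.mem_inter_iff, Set.mem_preimage]
      rw [heq]
      exact this
    have hU₁o : IsOpen U₁ :=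
      isOpen_biInter_finset fun q _ => hopen q (Set.Ioi 0) isOpen_Ioi
    have hU₂o : IsOpen U₂ := by
      apply isOpen_biUnion
      exact fun q _ => hopen q (Set.Iio 0) isOpen_Iio
    have hU₁mem : ∀ y, y ∈ U₁ ↔ ∀ q, 1 ≤ q → q ≤ m → y ∈ V ∧ 0 < hessOp q u y := by
      intro y
      rw [hU₁, Set.mem_iInter₂]
      constructor
      · intro h q h1 h2; exact h q (Finset.mem_Icc.mpr ⟨h1, h2⟩)
      · intro h q hq; obtain ⟨h1, h2⟩ := Finset.mem_Icc.1 hq; exact h q h1 h2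
    have hU₂mem : ∀ y, y ∈ U₂ ↔ ∃ q, 1 ≤ q ∧ q ≤ m ∧ y ∈ V ∧ hessOp q u y < 0 := by
      intro y
      rw [hU₂, Set.mem_iUnion₂]
      constructor
      · rintro ⟨q, hq, h1, h2⟩; obtain ⟨ha, hb⟩ := Finset.mem_Icc.1 hq; exact ⟨q, ha, hb, h1, h2⟩
      · rintro ⟨q, h1, h2, h3, h4⟩; exact ⟨q, Finset.mem_Icc.mpr ⟨h1, h2⟩, h3, h4⟩
    have hcover : K ⊆ U₁ ∪ U₂ := by
      intro y hy
      by_cases hcase : ∀ q, 1 ≤ q → q ≤ m → 0 ≤ hessOp q u y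
      · left
        rw [hU₁mem]
        intro q h1 h2
        refine ⟨hKV hy, ?_⟩
        exact trMinor_pos_chain (hessian_isHermitian hVo huV (hKV hy)) hmn1 hmn
          hcase (hTm y hy) q h1 h2
      · right
        push_neg at hcase
        obtain ⟨q, h1, h2, h3⟩ := hcase
        rw [hU₂mem]
        exact ⟨q, h1, h2, hKV hy, h3⟩
    have hdisj : (K ∩ (U₁ ∩ U₂)) = ∅ := by
      ext y
      simp only [Set.mem_inter_iff, Set.mem_empty_iff_false, iff_false]
      rintro ⟨hyK, hy1, hy2⟩
      obtain ⟨q, h1, h2, _, h4⟩ := (hU₂mem y).1 hy2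
      have := ((hU₁mem y).1 hy1 q h1 h2).2
      linarith
    -- the minimum point lies in U₁
    obtain ⟨z, hzK, hzmin⟩ := hKc.exists_isMinOn hKne hucont
    have hU₁ne : (K ∩ U₁).Nonempty := by
      by_cases hz0 : u z = 0
      · exfalso
        obtain ⟨x₀, hx₀⟩ := hΩc.nonempty
        have hu0' : ∀ y ∈ Ω, u y = 0 := fun y hy =>
          le_antisymm (hule y (hΩK hy)) (by rw [← hz0]; exact hzmin (hΩK hy))
        have hpd0 : ∀ j, ∀ y ∈ Ω, pd j u y = 0 := by
          intro j y hy
          have hev' : u =ᶠ[𝓝 y] (fun _ => (0:ℝ)) := by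
            filter_upwards [hΩo.mem_nhds hy] with w hw using hu0' w hw
          rw [pd, hev'.fderiv_eq]
          simp
        have hhess0 : hessian u x₀ = 0 := by
          ext i j
          have hev2 : pd j u =ᶠ[𝓝 x₀] (fun _ => (0:ℝ)) := by
            filter_upwards [hΩo.mem_nhds hx₀] with w hw using hpd0 j w hw
          show pd i (pd j u) x₀ = 0
          rw [pd, hev2.fderiv_eq]
          simp
        have hcontra := hTm x₀ (hΩK hx₀)
        rw [show hessOp m u x₀ = trMinor m (hessian u x₀) from rfl, hhess0,
          trMinor_zero_mat hmn1 hmn] at hcontra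
        exact lt_irrefl 0 hcontra
      · have huzneg : u z < 0 := lt_of_le_of_ne (hule z hzK) hz0
        have hzΩ : z ∈ Ω := hmemΩ z hzK (ne_of_lt huzneg)
        have hzV : z ∈ V := hKV hzK
        have hlocmin : IsLocalMin u z := by
          filter_upwards [hΩo.mem_nhds hzΩ] with y hy using hzmin (hΩK hy)
        have hquad : ∀ v : Fin n → ℝ, 0 ≤ fderiv ℝ (fderiv ℝ u) z v v := by
          intro v
          have hT : Tendsto (fun t : ℝ => z + t • v) (𝓝 0) (𝓝 z) := by
            have hc : Continuous fun t : ℝ => z + t • v := continuous_const.add (continuous_id.smul continuous_const)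
            have := hc.tendsto 0
            simpa using this
          have hev : ∀ᶠ t in 𝓝 (0:ℝ), z + t • v ∈ V := hT (hVo.mem_nhds hzV)
          have hfd : ∀ᶠ t in 𝓝 (0:ℝ),
              HasDerivAt (fun s : ℝ => -u (z + s • v)) (-(fderiv ℝ u (z + t • v) v)) t :=
            hev.mono fun t ht => (u_line_hasDerivAt hVo huV ht).neg
          have hg := (u_line_snd_hasDerivAt hVo huV hzV v).neg
          have hlm : IsLocalMax (fun t : ℝ => -u (z + t • v)) 0 := by
            have h' := hT.eventually hlocmin
            show ∀ᶠ t in 𝓝 (0:ℝ), -u (z + t • v) ≤ (fun t : ℝ => -u (z + t • v)) 0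
            simp only []
            filter_upwards [h'] with t ht
            simp only [zero_smul, add_zero]
            linarith [ht]
          have := second_deriv_test_max hfd hg hlm
          linarith
        have hpsd : (hessian u z).PosSemidef := by
          rw [Matrix.posSemidef_iff_dotProduct_mulVec]
          constructor
          · exact hessian_isHermitian hVo huV hzV
          · intro x
            have h1 : dotProduct (star x) ((hessian u z).mulVec x)
                = ∑ i, ∑ j, x i * x j * hessian u z i j := by
              rw [dotProduct, Finset.sum_congr rfl]
              intro i _
              rw [Matrix.mulVec, dotProduct, Finset.mul_sum]
              apply Finset.sum_congr rfl
              intro j _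
              simp [star_trivial]
              ring
            rw [h1, ← hessian_quadform hVo huV hzV x]
            exact hquad x
        have hz1 : z ∈ U₁ := by
          rw [hU₁mem]
          intro q h1 h2
          refine ⟨hzV, ?_⟩
          exact trMinor_pos_chain (hessian_isHermitian hVo huV hzV) hmn1 hmn
            (fun p hp1 hpm => trMinor_nonneg_psd hpsd (le_trans hpm hmn))
            (hTm z hzK) q h1 h2
        exact ⟨z, hzK, hz1⟩
    -- preconnectedness
    have hKconn : IsPreconnected K := (hΩc.closure).isPreconnected
    have hU₂empty : (K ∩ U₂) = ∅ := by
      by_contra h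
      have hne2 : (K ∩ U₂).Nonempty := Set.nonempty_iff_ne_empty.mpr h
      have := hKconn U₁ U₂ hU₁o hU₂o hcover hU₁ne hne2
      rw [Set.inter_comm U₁ U₂] at this
      rw [show K ∩ (U₂ ∩ U₁) = K ∩ (U₁ ∩ U₂) by rw [Set.inter_comm U₂ U₁]] at this
      rw [hdisj] at this
      exact Set.not_nonempty_empty this
    intro p hp1 hpm x hxK
    have hx1 : x ∈ U₁ := by
      rcases hcover hxK with h | h
      · exact h
      · exfalso
        have : x ∈ K ∩ U₂ := ⟨hxK, h⟩
        rw [hU₂empty] at this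
        exact this
    exact ((hU₁mem x).1 hx1 p hp1 hpm).2
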